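/- Let G be a group, φ an automorphism of G, and H a subgroup of G fixed pointwise by φ. Then the set of right cosets H\G with operation (Hx) ∗ (Hy) = H φ(x y⁻¹) y is a quandle: it satisfies idempotence, bijectivity of right translations, and right self-distributivity. -/

import Mathlib

/-- The setoid of right cosets of a subgroup `H` of `G`: `x ∼ x'` iff `Hx = Hx'`. -/
def rightCosetSetoid (G : Type*) [Group G] (H : Subgroup G) : Setoid G where
  r x x' := x' * x⁻¹ ∈ H
  iseqv := by
    constructor
    · intro x; simpa using H.one_mem
    · intro x y h; simpa using H.inv_mem h
    · intro x y z h1 h2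
      have := H.mul_mem h2 h1
      simpa [mul_assoc] using this

private lemma op_wd {G : Type*} [Group G] (ψ : G ≃* G) (H : Subgroup G)
    (hψ : ∀ h ∈ H, ψ h = h) (x y x' y' : G)
    (hx : (rightCosetSetoid G H).r x x') (hy : (rightCosetSetoid G H).r y y') :
    (rightCosetSetoid G H).r (ψ (x * y⁻¹) * y) (ψ (x' * y'⁻¹) * y') := by
  change x' * x⁻¹ ∈ H at hx
  change y' * y⁻¹ ∈ H at hy
  change ψ (x' * y'⁻¹) * y' * (ψ (x * y⁻¹) * y)⁻¹ ∈ H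
  have key : ψ (x' * y'⁻¹) * y' * (ψ (x * y⁻¹) * y)⁻¹
      = ψ (x' * x⁻¹) * (ψ (x * y⁻¹) * (ψ (y' * y⁻¹))⁻¹ * (y' * y⁻¹) * (ψ (x * y⁻¹))⁻¹) := by
    simp only [map_mul, map_inv]
    group
  rw [key, hψ _ hy, hψ _ hx]
  have h1 : ψ (x * y⁻¹) * (y' * y⁻¹)⁻¹ * (y' * y⁻¹) * (ψ (x * y⁻¹))⁻¹ = 1 := by group
  rw [h1, mul_one]
  exact hx

/-- The set of right cosets `H\G`, with the operation `(Hx) ∗ (Hy) = H φ(x y⁻¹) y`,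
is a quandle: there is a well-defined binary operation given by this formula on
representatives, and it satisfies idempotence, bijectivity of right translations,
and right self-distributivity. -/
theorem quotient_genAlexander_is_quandle (G : Type*) [Group G] (φ : G ≃* G)
    (H : Subgroup G) (hφ : ∀ h ∈ H, φ h = h) :
    ∃ op : Quotient (rightCosetSetoid G H) → Quotient (rightCosetSetoid G H) →
        Quotient (rightCosetSetoid G H),
      (∀ x y : G, op (Quotient.mk _ x) (Quotient.mk _ y) =
          Quotient.mk _ (φ (x * y⁻¹) * y)) ∧
      (∀ a, op a a = a) ∧
      (∀ b, Function.Bijective (fun a => op a b)) ∧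
      (∀ a b c, op (op a b) c = op (op a c) (op b c)) := by
  have hφ' : ∀ h ∈ H, φ.symm h = h := by
    intro h hh
    have := hφ h hh
    exact (MulEquiv.symm_apply_eq φ).mpr this.symm
  refine ⟨Quotient.lift₂ (fun x y => Quotient.mk _ (φ (x * y⁻¹) * y)) ?_, ?_, ?_, ?_, ?_⟩
  · intro x y x' y' hx hy
    exact Quotient.sound (op_wd φ H hφ x y x' y' hx hy)
  · intro x y; rfl
  · intro a
    refine Quotient.inductionOn a (fun x => ?_)
    show Quotient.mk _ (φ (x * x⁻¹) * x) = Quotient.mk _ x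
    simp
  · intro b
    refine Quotient.inductionOn b (fun y => ?_)
    set op' : Quotient (rightCosetSetoid G H) → Quotient (rightCosetSetoid G H) :=
      Quotient.lift (fun x => Quotient.mk _ (φ.symm (x * y⁻¹) * y))
        (fun x x' hx => Quotient.sound (op_wd φ.symm H hφ' x y x' y
          hx ((rightCosetSetoid G H).refl y))) with hop'
    have left : ∀ a, op' (Quotient.lift₂ (fun x y => Quotient.mk _ (φ (x * y⁻¹) * y))
        (fun x y x' y' hx hy => Quotient.sound (op_wd φ H hφ x y x' y' hx hy))
        a (Quotient.mk _ y)) = a := by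
      intro a
      refine Quotient.inductionOn a (fun x => ?_)
      show Quotient.mk _ (φ.symm (φ (x * y⁻¹) * y * y⁻¹) * y) = Quotient.mk _ x
      simp
    have right : ∀ a, Quotient.lift₂ (fun x y => Quotient.mk _ (φ (x * y⁻¹) * y))
        (fun x y x' y' hx hy => Quotient.sound (op_wd φ H hφ x y x' y' hx hy))
        (op' a) (Quotient.mk _ y) = a := by
      intro a
      refine Quotient.inductionOn a (fun x => ?_)
      show Quotient.mk _ (φ (φ.symm (x * y⁻¹) * y * y⁻¹) * y) = Quotient.mk _ x
      simp
    exact Function.bijective_iff_has_inverse.mpr ⟨op', left, right⟩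
  · intro a b c
    refine Quotient.inductionOn₃ a b c (fun x y z => ?_)
    show Quotient.mk _ (φ (φ (x * y⁻¹) * y * z⁻¹) * z)
      = Quotient.mk _ (φ ((φ (x * z⁻¹) * z) * (φ (y * z⁻¹) * z)⁻¹) * (φ (y * z⁻¹) * z))
    congr 1
    simp only [map_mul, map_inv]
    group
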